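/- arXiv:1911.05110 — 2 statements merged into one kernel-verified Lean document; each statement's English description precedes it below -/
import Mathlib

section
/- Let d ≥ 1, t > 0, and let Σ ⊆ ℝ^d be a measurable set of finite Lebesgue measure. Let Σ' = { x ∈ ℝ^d : (G_t * 1_Σ)(x) ≥ 1/2 } be the set produced by one step of the Merriman–Bence–Osher threshold dynamics scheme. Then E_t(Σ') ≤ E_t(Σ), i.e., the scheme is unconditionally energy stable. -/
open MeasureTheory

/-- The Gaussian kernel on `ℝ^d` at time `t`. -/
noncomputable def gaussKer (d : ℕ) (t : ℝ) (x : EuclideanSpace ℝ (Fin d)) : ℝ :=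
  (4 * Real.pi * t) ^ (-(d : ℝ) / 2) * Real.exp (-‖x‖ ^ 2 / (4 * t))

/-- Convolution of the Gaussian kernel on `ℝ^d` with a function. -/
noncomputable def gaussConv (d : ℕ) (t : ℝ) (u : EuclideanSpace ℝ (Fin d) → ℝ)
    (x : EuclideanSpace ℝ (Fin d)) : ℝ :=
  ∫ y : EuclideanSpace ℝ (Fin d), gaussKer d t (x - y) * u y

/-- The threshold-dynamics energy `E_t(Σ) = ∫ (1 − 1_Σ)(G_t * 1_Σ)`. -/
noncomputable def tdEnergy (d : ℕ) (t : ℝ) (S : Set (EuclideanSpace ℝ (Fin d))) : ℝ :=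
  ∫ x : EuclideanSpace ℝ (Fin d),
    (1 - Set.indicator S 1 x) * gaussConv d t (Set.indicator S 1) x


open Real

variable {d : ℕ} {t s b : ℝ}

abbrev Vd (d : ℕ) := EuclideanSpace ℝ (Fin d)

lemma gaussKer_eq (d : ℕ) (t : ℝ) (x : Vd d) :
    gaussKer d t x = (4 * Real.pi * t) ^ (-(d : ℝ) / 2) * Real.exp (-(1/(4*t)) * ‖x‖ ^ 2) := by
  rw [gaussKer]; ring_nf

lemma gaussKer_nonneg (ht : 0 < t) (x : Vd d) : 0 ≤ gaussKer d t x := by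
  have := Real.pi_pos
  unfold gaussKer; positivity

lemma gaussKer_symm (x y : Vd d) : gaussKer d t (x - y) = gaussKer d t (y - x) := by
  simp [gaussKer, norm_sub_rev x y]

lemma integrable_exp_gauss (hb : (0:ℝ) < b) :
    Integrable (fun x : Vd d => Real.exp (-b * ‖x‖^2)) := by
  have := (GaussianFourier.integrable_cexp_neg_mul_sq_norm_add
    (V := Vd d) (b := (b : ℂ)) (by simpa using hb) 0 0).norm
  apply this.congr
  filter_upwards with a
  rw [zero_mul, add_zero, Complex.norm_exp,
    show (-(b:ℂ) * (‖a‖:ℂ)^2) = ((-b * ‖a‖^2 : ℝ) : ℂ) by push_cast; ring, Complex.ofReal_re]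

lemma integrable_gaussKer (ht : 0 < t) : Integrable (gaussKer d t) := by
  have hb : (0:ℝ) < 1/(4*t) := by positivity
  have h := (integrable_exp_gauss (d := d) hb).const_mul ((4 * Real.pi * t) ^ (-(d : ℝ) / 2))
  apply h.congr
  filter_upwards with x
  rw [gaussKer_eq]

lemma integral_exp_gauss (hb : (0:ℝ) < b) :
    ∫ x : Vd d, Real.exp (-b * ‖x‖^2) = (Real.pi / b) ^ ((d:ℝ)/2) := by
  have h := GaussianFourier.integral_rexp_neg_mul_sq_norm (V := Vd d) hb
  simpa [finrank_euclideanSpace] using h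

lemma integral_gaussKer (ht : 0 < t) : ∫ x : Vd d, gaussKer d t x = 1 := by
  have hb : (0:ℝ) < 1/(4*t) := by positivity
  have hpi := Real.pi_pos
  simp_rw [gaussKer_eq]
  rw [integral_const_mul, integral_exp_gauss hb]
  have h1 : Real.pi / (1/(4*t)) = 4 * Real.pi * t := by field_simp
  rw [h1, ← Real.rpow_add (by positivity)]
  rw [show (-(d:ℝ)/2 + (d:ℝ)/2) = 0 by ring, Real.rpow_zero]


lemma aux_rpow (a c : ℝ) (ha : 0 < a) (hc : 0 < c) (q : ℝ) :
    a ^ (-q) * a ^ (-q) * c ^ q = (a * a / c) ^ (-q) := by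
  rw [Real.div_rpow (by positivity) hc.le, Real.mul_rpow ha.le ha.le, Real.rpow_neg hc.le,
    div_eq_mul_inv, inv_inv]

lemma norm_iden (w y : Vd d) :
    ‖w - y‖^2 + ‖y‖^2 = 2*‖y - (2:ℝ)⁻¹ • w‖^2 + ‖w‖^2/2 := by
  have h1 := @norm_sub_sq_real (Vd d) _ _ w y
  have h2 := @norm_sub_sq_real (Vd d) _ _ y ((2:ℝ)⁻¹ • w)
  rw [real_inner_smul_right, norm_smul] at h2
  have h3 := real_inner_comm w y
  simp only [norm_inv, Real.norm_ofNat] at h2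
  nlinarith [h1, h2, h3]

lemma gauss_mul (hs : 0 < s) (w y : Vd d) :
    gaussKer d s (w - y) * gaussKer d s y =
      ((4*π*s) ^ (-(d:ℝ)/2) * (4*π*s) ^ (-(d:ℝ)/2) * Real.exp (-‖w‖^2/(8*s))) *
        Real.exp (-(1/(2*s)) * ‖y - (2:ℝ)⁻¹ • w‖^2) := by
  rw [gaussKer, gaussKer]
  rw [show ((4*π*s) ^ (-(d:ℝ)/2) * Real.exp (-‖w-y‖^2/(4*s))) *
      ((4*π*s) ^ (-(d:ℝ)/2) * Real.exp (-‖y‖^2/(4*s))) =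
      (4*π*s) ^ (-(d:ℝ)/2) * (4*π*s) ^ (-(d:ℝ)/2) *
        (Real.exp (-‖w-y‖^2/(4*s)) * Real.exp (-‖y‖^2/(4*s))) from by ring]
  rw [← Real.exp_add]
  have hexp : -‖w-y‖^2/(4*s) + -‖y‖^2/(4*s)
      = -‖w‖^2/(8*s) + -(1/(2*s)) * ‖y - (2:ℝ)⁻¹ • w‖^2 := by
    have hN := norm_iden w y
    set A := ‖w-y‖^2; set B := ‖y‖^2; set C := ‖y - (2:ℝ)⁻¹ • w‖^2; set D := ‖w‖^2
    rw [show -A/(4*s) + -B/(4*s) = -(A+B)/(4*s) from by ring, hN]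
    field_simp
    ring
  rw [hexp, Real.exp_add]; ring

lemma gaussKer_semigroup (hs : 0 < s) (w : Vd d) :
    ∫ y : Vd d, gaussKer d s (w - y) * gaussKer d s y = gaussKer d (2*s) w := by
  have hpi := Real.pi_pos
  simp_rw [gauss_mul hs]
  rw [integral_const_mul]
  have h1 : ∫ y : Vd d, Real.exp (-(1/(2*s)) * ‖y - (2:ℝ)⁻¹ • w‖^2)
      = (π/(1/(2*s))) ^ ((d:ℝ)/2) := by
    rw [integral_sub_right_eq_self (μ := volume)
      (fun y => Real.exp (-(1/(2*s)) * ‖y‖^2)) ((2:ℝ)⁻¹ • w)]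
    exact integral_exp_gauss (by positivity)
  rw [h1, gaussKer]
  have h2 : π/(1/(2*s)) = 2*π*s := by field_simp
  rw [h2]
  have h3 : (4*π*s) ^ (-(d:ℝ)/2) * (4*π*s) ^ (-(d:ℝ)/2) * (2*π*s) ^ ((d:ℝ)/2)
      = (4*π*(2*s)) ^ (-(d:ℝ)/2) := by
    have h5 := aux_rpow (4*π*s) (2*π*s) (by positivity) (by positivity) ((d:ℝ)/2)
    rw [show 4*π*s*(4*π*s)/(2*π*s) = 4*π*(2*s) from by field_simp; ring] at h5
    rw [show -(d:ℝ)/2 = -((d:ℝ)/2) from by ring]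
    exact h5
  rw [show -‖w‖^2/(4*(2*s)) = -‖w‖^2/(8*s) from by ring, ← h3]
  ring

lemma gaussKer_semigroup' (hs : 0 < s) (x z : Vd d) :
    ∫ y : Vd d, gaussKer d s (x - y) * gaussKer d s (y - z) = gaussKer d (2*s) (x - z) := by
  rw [← gaussKer_semigroup hs (x - z),
    ← integral_add_right_eq_self (μ := volume)
      (fun y => gaussKer d s (x - y) * gaussKer d s (y - z)) z]
  congr 1 with y
  congr 2
  · abel
  · abel


-- new stage 3
lemma measurable_gaussKer (d : ℕ) (t : ℝ) : Measurable (gaussKer d t) := by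
  unfold gaussKer
  fun_prop

lemma gaussKer_le (ht : 0 < t) (x : Vd d) :
    gaussKer d t x ≤ (4 * Real.pi * t) ^ (-(d : ℝ) / 2) := by
  have hpi := Real.pi_pos
  rw [gaussKer]
  have h1 : Real.exp (-‖x‖ ^ 2 / (4 * t)) ≤ 1 := by
    rw [Real.exp_le_one_iff]
    have : (0:ℝ) ≤ ‖x‖^2 := by positivity
    have h2 : (0:ℝ) < 4*t := by positivity
    exact div_nonpos_of_nonpos_of_nonneg (by linarith) (by linarith)
  nlinarith [Real.rpow_pos_of_pos (show (0:ℝ) < 4*Real.pi*t by positivity) (-(d:ℝ)/2)]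

lemma integrable_ker_slice (ht : 0 < t) (x : Vd d) :
    Integrable (fun y : Vd d => gaussKer d t (x - y)) :=
  (integrable_gaussKer ht).comp_sub_left x

lemma integral_ker_slice (ht : 0 < t) (x : Vd d) :
    ∫ y : Vd d, gaussKer d t (x - y) = 1 := by
  rw [integral_sub_left_eq_self (gaussKer d t) volume x]
  exact integral_gaussKer ht

lemma integral_ker_slice' (ht : 0 < t) (y : Vd d) :
    ∫ x : Vd d, gaussKer d t (x - y) = 1 := by
  rw [integral_sub_right_eq_self (μ := volume) (gaussKer d t) y]
  exact integral_gaussKer ht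

/-- integrand integrable for bounded measurable u -/
lemma integrable_conv_integrand (ht : 0 < t) (x : Vd d) {u : Vd d → ℝ}
    (hu : Measurable u) (hub : ∀ y, |u y| ≤ 1) :
    Integrable (fun y : Vd d => gaussKer d t (x - y) * u y) := by
  have h := (integrable_ker_slice ht x).bdd_mul hu.aestronglyMeasurable
    (c := 1) (Filter.Eventually.of_forall fun y => by simpa using hub y)
  simpa [mul_comm] using h

lemma abs_gaussConv_le_one (ht : 0 < t) {u : Vd d → ℝ}
    (hu : Measurable u) (hub : ∀ y, |u y| ≤ 1) (x : Vd d) :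
    |gaussConv d t u x| ≤ 1 := by
  rw [gaussConv]
  calc |∫ y, gaussKer d t (x - y) * u y| ≤ ∫ y, |gaussKer d t (x - y) * u y| := by
        simpa [abs_mul] using
          norm_integral_le_integral_norm (μ := volume) (fun y => gaussKer d t (x - y) * u y)
    _ ≤ ∫ y, gaussKer d t (x - y) := by
        apply integral_mono ((integrable_conv_integrand ht x hu hub).abs)
          (integrable_ker_slice ht x)
        intro y
        dsimp only
        rw [abs_mul, abs_of_nonneg (gaussKer_nonneg ht _)]
        nlinarith [gaussKer_nonneg ht (x - y), hub y, abs_nonneg (u y)]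
    _ = 1 := integral_ker_slice ht x

lemma stronglyMeasurable_gaussConv (ht : 0 < t) {u : Vd d → ℝ} (hu : Measurable u) :
    StronglyMeasurable (gaussConv d t u) := by
  have h : StronglyMeasurable (fun p : Vd d × Vd d => gaussKer d t (p.1 - p.2) * u p.2) :=
    (((measurable_gaussKer d t).comp (measurable_fst.sub measurable_snd)).mul
      (hu.comp measurable_snd)).stronglyMeasurable
  exact h.integral_prod_right'

/-- product integrability of the convolution integrand -/
lemma integrable_prod_ker (ht : 0 < t) {u : Vd d → ℝ} (hu : Integrable u) :
    Integrable (fun p : Vd d × Vd d => gaussKer d t (p.1 - p.2) * u p.2)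
      (volume.prod volume) := by
  have h := hu.convolution_integrand (ContinuousLinearMap.mul ℝ ℝ) (integrable_gaussKer ht)
  simpa [mul_comm] using h

lemma integrable_gaussConv (ht : 0 < t) {u : Vd d → ℝ} (hu : Integrable u) :
    Integrable (gaussConv d t u) :=
  (integrable_prod_ker ht hu).integral_prod_left

lemma integral_gaussConv (ht : 0 < t) {u : Vd d → ℝ} (hu : Integrable u) :
    ∫ x : Vd d, gaussConv d t u x = ∫ y : Vd d, u y := by
  have hswap := integral_integral_swap
    (f := fun x y : Vd d => gaussKer d t (x - y) * u y) (integrable_prod_ker ht hu)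
  simp only [gaussConv]
  rw [hswap]
  congr 1 with y
  rw [integral_mul_const, integral_ker_slice' ht y, one_mul]

lemma indicator_le_one' (A : Set (Vd d)) (x : Vd d) :
    Set.indicator A (1 : Vd d → ℝ) x ≤ 1 := by
  classical
  by_cases hx : x ∈ A <;> simp [Set.indicator_of_mem, Set.indicator_of_notMem, hx]

lemma indicator_nonneg' (A : Set (Vd d)) (x : Vd d) :
    0 ≤ Set.indicator A (1 : Vd d → ℝ) x := by
  classical
  by_cases hx : x ∈ A <;> simp [Set.indicator_of_mem, Set.indicator_of_notMem, hx]

lemma integrable_of_le_indicator {A : Set (Vd d)} (hA : MeasurableSet A)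
    (hAfin : volume A < ⊤) {f : Vd d → ℝ} (hf : Measurable f)
    (hfb : ∀ x, |f x| ≤ Set.indicator A 1 x) : Integrable f := by
  have hind : Integrable (Set.indicator A (fun _ => (1:ℝ))) := by
    rw [integrable_indicator_iff hA]
    exact integrableOn_const hAfin.ne
  exact hind.mono hf.aestronglyMeasurable (Filter.Eventually.of_forall fun x => by
    have h1 := hfb x
    simp only [Real.norm_eq_abs]
    exact h1.trans (le_abs_self _))

lemma integrable_prod_mul (ht : 0 < t) {f g : Vd d → ℝ} (hf : Measurable f)
    (hfb : ∀ x, |f x| ≤ 1) (hg : Integrable g) :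
    Integrable (fun p : Vd d × Vd d => f p.1 * (gaussKer d t (p.1 - p.2) * g p.2))
      (volume.prod volume) :=
  (integrable_prod_ker ht hg).bdd_mul (hf.comp measurable_fst).aestronglyMeasurable
    (c := 1) (Filter.Eventually.of_forall fun p => by simpa using hfb p.1)

lemma B_symm (ht : 0 < t) {f g : Vd d → ℝ} (hf : Measurable f) (hfb : ∀ x, |f x| ≤ 1)
    (hg : Measurable g) (hgb : ∀ x, |g x| ≤ 1) (hgi : Integrable g) :
    ∫ x : Vd d, f x * gaussConv d t g x = ∫ y : Vd d, g y * gaussConv d t f y := by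
  have h1 : ∫ x : Vd d, f x * gaussConv d t g x
      = ∫ x : Vd d, ∫ y : Vd d, f x * (gaussKer d t (x - y) * g y) := by
    congr 1 with x
    rw [gaussConv, integral_const_mul]
  rw [h1, integral_integral_swap (f := fun x y : Vd d => f x * (gaussKer d t (x - y) * g y))
    (integrable_prod_mul ht hf hfb hgi)]
  congr 1 with y
  have h2 : ∫ x : Vd d, f x * (gaussKer d t (x - y) * g y)
      = (∫ x : Vd d, gaussKer d t (y - x) * f x) * g y := by
    rw [← integral_mul_const]
    congr 1 with x
    rw [gaussKer_symm x y]
    ring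
  rw [h2, ← gaussConv]
  ring

lemma conv_factor (ht : 0 < t) {f : Vd d → ℝ} (hf : Measurable f)
    (hfb : ∀ y, |f y| ≤ 1) (hfi : Integrable f) (x : Vd d) :
    gaussConv d t f x = ∫ z : Vd d, gaussKer d (t/2) (x - z) * gaussConv d (t/2) f z := by
  have hs : 0 < t/2 := by linarith
  have hpi := Real.pi_pos
  have hsg : ∀ y : Vd d, gaussKer d t (x - y)
      = ∫ z : Vd d, gaussKer d (t/2) (x - z) * gaussKer d (t/2) (z - y) := by
    intro y
    have h := gaussKer_semigroup' hs x y
    rw [show 2*(t/2) = t from by ring] at h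
    exact h.symm
  have hInt : Integrable (fun p : Vd d × Vd d =>
      (gaussKer d (t/2) (x - p.2) * gaussKer d (t/2) (p.2 - p.1)) * f p.1)
      (volume.prod volume) := by
    have hmeas : AEStronglyMeasurable (fun p : Vd d × Vd d =>
        (gaussKer d (t/2) (x - p.2) * gaussKer d (t/2) (p.2 - p.1)) * f p.1)
        (volume.prod volume) :=
      ((((measurable_gaussKer d (t/2)).comp (measurable_const.sub measurable_snd)).mul
        ((measurable_gaussKer d (t/2)).comp (measurable_snd.sub measurable_fst))).mul
        (hf.comp measurable_fst)).aestronglyMeasurable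
    rw [integrable_prod_iff hmeas]
    constructor
    · filter_upwards with y
      have hbase : Integrable (fun z : Vd d => gaussKer d (t/2) (x - z)) :=
        integrable_ker_slice hs x
      have hb2 : Measurable (fun z : Vd d => gaussKer d (t/2) (z - y) * f y) :=
        ((measurable_gaussKer d (t/2)).comp
          ((measurable_id.sub measurable_const) : Measurable (fun z : Vd d => z - y))).mul_const _
      have h := hbase.bdd_mul hb2.aestronglyMeasurable
        (c := (4 * Real.pi * (t/2)) ^ (-(d : ℝ) / 2)) (Filter.Eventually.of_forall fun z => by
          rw [Real.norm_eq_abs, abs_mul, abs_of_nonneg (gaussKer_nonneg hs _)]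
          have h1 := gaussKer_le hs (z - y)
          have h2 := hfb y
          nlinarith [gaussKer_nonneg hs (z - y), abs_nonneg (f y)])
      exact h.congr (Filter.Eventually.of_forall fun z => by ring)
    · have hkey : ∀ y : Vd d,
          (∫ z : Vd d, ‖(gaussKer d (t/2) (x - z) * gaussKer d (t/2) (z - y)) * f y‖)
            = gaussKer d t (x - y) * |f y| := by
        intro y
        have : ∀ z : Vd d, ‖(gaussKer d (t/2) (x - z) * gaussKer d (t/2) (z - y)) * f y‖
            = (gaussKer d (t/2) (x - z) * gaussKer d (t/2) (z - y)) * |f y| := by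
          intro z
          rw [Real.norm_eq_abs, abs_mul, abs_of_nonneg
            (mul_nonneg (gaussKer_nonneg hs _) (gaussKer_nonneg hs _))]
        simp_rw [this]
        rw [integral_mul_const]
        congr 1
        have h := gaussKer_semigroup' hs x y
        rw [show 2*(t/2) = t from by ring] at h
        exact h
      have hmeas2 : AEStronglyMeasurable (fun y : Vd d =>
          ∫ z : Vd d, ‖(gaussKer d (t/2) (x - z) * gaussKer d (t/2) (z - y)) * f y‖) volume := by
        apply StronglyMeasurable.aestronglyMeasurable
        apply StronglyMeasurable.integral_prod_right'
          (f := fun p : Vd d × Vd d =>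
            ‖(gaussKer d (t/2) (x - p.2) * gaussKer d (t/2) (p.2 - p.1)) * f p.1‖)
        exact ((((measurable_gaussKer d (t/2)).comp (measurable_const.sub measurable_snd)).mul
          ((measurable_gaussKer d (t/2)).comp (measurable_snd.sub measurable_fst))).mul
          (hf.comp measurable_fst)).norm.stronglyMeasurable
      apply Integrable.mono' ((integrable_ker_slice ht x).const_mul 1) hmeas2
      filter_upwards with y
      rw [Real.norm_eq_abs, hkey y, abs_of_nonneg
        (mul_nonneg (gaussKer_nonneg ht _) (abs_nonneg _))]
      have h1 := hfb y
      have h2 := gaussKer_nonneg ht (x - y)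
      nlinarith [abs_nonneg (f y)]
  calc ∫ y : Vd d, gaussKer d t (x - y) * f y
      = ∫ y : Vd d, ∫ z : Vd d,
          (gaussKer d (t/2) (x - z) * gaussKer d (t/2) (z - y)) * f y := by
        congr 1 with y
        rw [hsg y]
        exact (integral_mul_const _ _).symm
    _ = ∫ z : Vd d, ∫ y : Vd d,
          (gaussKer d (t/2) (x - z) * gaussKer d (t/2) (z - y)) * f y :=
        integral_integral_swap (f := fun y z : Vd d =>
          (gaussKer d (t/2) (x - z) * gaussKer d (t/2) (z - y)) * f y) hInt
    _ = ∫ z : Vd d, gaussKer d (t/2) (x - z) * gaussConv d (t/2) f z := by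
        congr 1 with z
        rw [gaussConv, ← integral_const_mul]
        congr 1 with y
        ring

lemma B_self_nonneg (ht : 0 < t) {A : Set (Vd d)} (hA : MeasurableSet A)
    (hAfin : volume A < ⊤) {f : Vd d → ℝ} (hf : Measurable f)
    (hfb : ∀ x, |f x| ≤ Set.indicator A 1 x) :
    0 ≤ ∫ x : Vd d, f x * gaussConv d t f x := by
  have hs : 0 < t/2 := by linarith
  have hfb1 : ∀ x, |f x| ≤ 1 := fun x => (hfb x).trans (indicator_le_one' A x)
  have hfi : Integrable f := integrable_of_le_indicator hA hAfin hf hfb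
  set g := gaussConv d (t/2) f with hg
  have hgi : Integrable g := integrable_gaussConv hs hfi
  have h1 : ∫ x : Vd d, f x * gaussConv d t f x
      = ∫ x : Vd d, ∫ z : Vd d, f x * (gaussKer d (t/2) (x - z) * g z) := by
    congr 1 with x
    rw [conv_factor ht hf hfb1 hfi x, integral_const_mul]
  rw [h1, integral_integral_swap (f := fun x z : Vd d =>
    f x * (gaussKer d (t/2) (x - z) * g z))
    (integrable_prod_mul hs hf hfb1 hgi)]
  have h2 : ∫ z : Vd d, ∫ x : Vd d, f x * (gaussKer d (t/2) (x - z) * g z)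
      = ∫ z : Vd d, g z * g z := by
    congr 1 with z
    have h3 : ∫ x : Vd d, f x * (gaussKer d (t/2) (x - z) * g z)
        = (∫ x : Vd d, gaussKer d (t/2) (z - x) * f x) * g z := by
      rw [← integral_mul_const]
      congr 1 with x
      rw [gaussKer_symm x z]
      ring
    rw [h3, show (∫ x : Vd d, gaussKer d (t/2) (z - x) * f x) = g z from rfl]
  rw [h2]
  exact integral_nonneg fun z => mul_self_nonneg (g z)

/-- One step of the MBO threshold dynamics scheme does not increase the
threshold-dynamics energy: the scheme is unconditionally energy stable. -/
theorem mbo_unconditionally_energy_stable (d : ℕ) (hd : 1 ≤ d) (t : ℝ) (ht : 0 < t)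
    (S : Set (EuclideanSpace ℝ (Fin d))) (hSmeas : MeasurableSet S)
    (hSfin : volume S < ⊤)
    (S' : Set (EuclideanSpace ℝ (Fin d)))
    (hS' : S' = {x : EuclideanSpace ℝ (Fin d) | 1 / 2 ≤ gaussConv d t (Set.indicator S 1) x}) :
    tdEnergy d t S' ≤ tdEnergy d t S := by
  classical
  set u : Vd d → ℝ := Set.indicator S 1 with hu_def
  set conv : Vd d → ℝ := gaussConv d t u with hconv_def
  have humeas : Measurable u := measurable_one.indicator hSmeas
  have hu_nonneg : ∀ x, 0 ≤ u x := fun x => indicator_nonneg' S x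
  have hub : ∀ x, |u x| ≤ 1 := fun x => by
    rw [abs_of_nonneg (hu_nonneg x)]; exact indicator_le_one' S x
  have hubind : ∀ x, |u x| ≤ Set.indicator S 1 x := fun x => by
    rw [abs_of_nonneg (hu_nonneg x)]
  have huint : Integrable u := integrable_of_le_indicator hSmeas hSfin humeas hubind
  have hconv_sm : StronglyMeasurable conv := stronglyMeasurable_gaussConv ht humeas
  have hconvi : Integrable conv := integrable_gaussConv ht huint
  have hconv_nonneg : ∀ x, 0 ≤ conv x := fun x =>
    integral_nonneg fun y => mul_nonneg (gaussKer_nonneg ht _) (hu_nonneg y)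
  -- S' is measurable
  have hS'meas : MeasurableSet S' := by
    rw [hS']
    exact measurableSet_le measurable_const hconv_sm.measurable
  -- S' has finite volume
  have hS'fin : volume S' < ⊤ := by
    have hL : ∫⁻ x, ENNReal.ofReal (conv x) = ENNReal.ofReal (∫ x, conv x) :=
      (ofReal_integral_eq_lintegral_ofReal hconvi
        (Filter.Eventually.of_forall hconv_nonneg)).symm
    have key : ENNReal.ofReal (1/2) * volume S' ≤ ∫⁻ x, ENNReal.ofReal (conv x) := by
      calc ENNReal.ofReal (1/2) * volume S'
          = ∫⁻ _ in S', ENNReal.ofReal (1/2) := (setLIntegral_const S' _).symm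
        _ ≤ ∫⁻ x in S', ENNReal.ofReal (conv x) := by
            apply setLIntegral_mono (hconv_sm.measurable.ennreal_ofReal)
            intro x hx
            rw [hS'] at hx
            exact ENNReal.ofReal_le_ofReal hx
        _ ≤ ∫⁻ x, ENNReal.ofReal (conv x) := setLIntegral_le_lintegral _ _
    rw [hL] at key
    by_contra hcon
    rw [lt_top_iff_ne_top, not_not] at hcon
    rw [hcon, ENNReal.mul_top (by norm_num)] at key
    exact ENNReal.ofReal_ne_top (top_le_iff.mp key)
  set u' : Vd d → ℝ := Set.indicator S' 1 with hu'_def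
  set conv' : Vd d → ℝ := gaussConv d t u' with hconv'_def
  have hu'meas : Measurable u' := measurable_one.indicator hS'meas
  have hu'_nonneg : ∀ x, 0 ≤ u' x := fun x => indicator_nonneg' S' x
  have hu'b : ∀ x, |u' x| ≤ 1 := fun x => by
    rw [abs_of_nonneg (hu'_nonneg x)]; exact indicator_le_one' S' x
  have hu'bind : ∀ x, |u' x| ≤ Set.indicator S' 1 x := fun x => by
    rw [abs_of_nonneg (hu'_nonneg x)]
  have hu'int : Integrable u' := integrable_of_le_indicator hS'meas hS'fin hu'meas hu'bind
  have hconv'i : Integrable conv' := integrable_gaussConv ht hu'int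
  have hconv'_sm : StronglyMeasurable conv' := stronglyMeasurable_gaussConv ht hu'meas
  have hconvb : ∀ x, |conv x| ≤ 1 := abs_gaussConv_le_one ht humeas hub
  have hconv'b : ∀ x, |conv' x| ≤ 1 := abs_gaussConv_le_one ht hu'meas hu'b
  -- the bilinear quantities
  set Buu : ℝ := ∫ x : Vd d, u x * conv x with hBuu
  set Bu'u : ℝ := ∫ x : Vd d, u' x * conv x with hBu'u
  set Buu' : ℝ := ∫ x : Vd d, u x * conv' x with hBuu'
  set Bu'u' : ℝ := ∫ x : Vd d, u' x * conv' x with hBu'u'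
  set m : ℝ := ∫ x : Vd d, u x with hm
  set m' : ℝ := ∫ x : Vd d, u' x with hm'
  -- integrability of products
  have hi_uc : Integrable (fun x => u x * conv x) :=
    hconvi.bdd_mul humeas.aestronglyMeasurable (c := 1) (Filter.Eventually.of_forall fun x => by simpa using hub x)
  have hi_u'c : Integrable (fun x => u' x * conv x) :=
    hconvi.bdd_mul hu'meas.aestronglyMeasurable (c := 1) (Filter.Eventually.of_forall fun x => by simpa using hu'b x)
  have hi_uc' : Integrable (fun x => u x * conv' x) :=
    hconv'i.bdd_mul humeas.aestronglyMeasurable (c := 1) (Filter.Eventually.of_forall fun x => by simpa using hub x)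
  have hi_u'c' : Integrable (fun x => u' x * conv' x) :=
    hconv'i.bdd_mul hu'meas.aestronglyMeasurable (c := 1) (Filter.Eventually.of_forall fun x => by simpa using hu'b x)
  -- symmetry
  have hsymm : Buu' = Bu'u := B_symm ht humeas hub hu'meas hu'b hu'int
  -- energy identities
  have hmass : ∫ x : Vd d, conv x = m := integral_gaussConv ht huint
  have hmass' : ∫ x : Vd d, conv' x = m' := integral_gaussConv ht hu'int
  have hE : tdEnergy d t S = m - Buu := by
    rw [tdEnergy]
    have : ∀ x : Vd d, (1 - Set.indicator S 1 x) * gaussConv d t (Set.indicator S 1) x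
        = conv x - u x * conv x := fun x => by rw [hconv_def, hu_def]; ring
    rw [show (∫ x : Vd d, (1 - Set.indicator S 1 x) * gaussConv d t (Set.indicator S 1) x)
        = ∫ x : Vd d, (conv x - u x * conv x) from by congr 1 with x; exact this x]
    rw [integral_sub hconvi hi_uc, hmass]
  have hE' : tdEnergy d t S' = m' - Bu'u' := by
    rw [tdEnergy]
    have : ∀ x : Vd d, (1 - Set.indicator S' 1 x) * gaussConv d t (Set.indicator S' 1) x
        = conv' x - u' x * conv' x := fun x => by rw [hconv'_def, hu'_def]; ring
    rw [show (∫ x : Vd d, (1 - Set.indicator S' 1 x) * gaussConv d t (Set.indicator S' 1) x)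
        = ∫ x : Vd d, (conv' x - u' x * conv' x) from by congr 1 with x; exact this x]
    rw [integral_sub hconv'i hi_u'c', hmass']
  -- the difference function
  set f : Vd d → ℝ := fun x => u' x - u x with hf_def
  have hfmeas : Measurable f := hu'meas.sub humeas
  have hfbind : ∀ x, |f x| ≤ Set.indicator (S ∪ S') 1 x := by
    intro x
    by_cases h1 : x ∈ S <;> by_cases h2 : x ∈ S' <;>
      simp [hf_def, hu_def, hu'_def, Set.indicator_of_mem, Set.indicator_of_notMem, h1, h2]
  have hfb1 : ∀ x, |f x| ≤ 1 := fun x => (hfbind x).trans (indicator_le_one' _ x)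
  have hUn : MeasurableSet (S ∪ S') := hSmeas.union hS'meas
  have hUnfin : volume (S ∪ S') < ⊤ :=
    lt_of_le_of_lt (measure_union_le S S') (ENNReal.add_lt_top.2 ⟨hSfin, hS'fin⟩)
  have hfint : Integrable f := integrable_of_le_indicator hUn hUnfin hfmeas hfbind
  -- T2 : quadratic term, nonnegative
  have hT2 : 0 ≤ ∫ x : Vd d, f x * gaussConv d t f x :=
    B_self_nonneg ht hUn hUnfin hfmeas hfbind
  -- expand gaussConv of f
  have hconvf : ∀ x, gaussConv d t f x = conv' x - conv x := by
    intro x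
    rw [gaussConv, hconv'_def, hconv_def, gaussConv, gaussConv]
    rw [show (∫ y : Vd d, gaussKer d t (x - y) * f y)
        = ∫ y : Vd d, (gaussKer d t (x - y) * u' y - gaussKer d t (x - y) * u y) from by
      congr 1 with y; rw [hf_def]; ring]
    exact integral_sub (integrable_conv_integrand ht x hu'meas hu'b)
      (integrable_conv_integrand ht x humeas hub)
  -- value of T2
  have hT2val : ∫ x : Vd d, f x * gaussConv d t f x
      = (Bu'u' - Buu') - (Bu'u - Buu) := by
    rw [show (∫ x : Vd d, f x * gaussConv d t f x)
        = ∫ x : Vd d, ((u' x * conv' x - u x * conv' x) - (u' x * conv x - u x * conv x))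
        from by congr 1 with x; rw [hconvf x, hf_def]; ring]
    rw [integral_sub (f := fun x => u' x * conv' x - u x * conv' x)
      (g := fun x => u' x * conv x - u x * conv x) (hi_u'c'.sub hi_uc') (hi_u'c.sub hi_uc),
      integral_sub (f := fun x => u' x * conv' x) (g := fun x => u x * conv' x) hi_u'c' hi_uc',
      integral_sub (f := fun x => u' x * conv x) (g := fun x => u x * conv x) hi_u'c hi_uc]
  -- T1 : linear term, nonpositive
  have hT1 : (∫ x : Vd d, f x * (1 - 2 * conv x)) ≤ 0 := by
    apply integral_nonpos
    intro x
    by_cases hx : x ∈ S'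
    · have hge : (1:ℝ)/2 ≤ conv x := by
        rw [hS'] at hx; exact hx
      have hf_nn : 0 ≤ f x := by
        rw [hf_def, hu'_def, hu_def]
        simp only [Set.indicator_of_mem hx]
        have := indicator_le_one' S x
        simp only [Pi.one_apply]
        linarith [this]
      have : 1 - 2 * conv x ≤ 0 := by linarith
      exact mul_nonpos_of_nonneg_of_nonpos hf_nn this
    · have hlt : conv x < 1/2 := by
        by_contra hcon
        push_neg at hcon
        exact hx (by rw [hS']; exact hcon)
      have hf_np : f x ≤ 0 := by
        rw [hf_def, hu'_def, hu_def]
        simp only [Set.indicator_of_notMem hx]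
        have := indicator_nonneg' S x
        linarith [this]
      have : 0 ≤ 1 - 2 * conv x := by linarith
      exact mul_nonpos_of_nonpos_of_nonneg hf_np this
  have hT1val : (∫ x : Vd d, f x * (1 - 2 * conv x))
      = (m' - m) - 2 * (Bu'u - Buu) := by
    rw [show (∫ x : Vd d, f x * (1 - 2 * conv x))
        = ∫ x : Vd d, ((u' x - u x) - 2 * (u' x * conv x - u x * conv x)) from by
      congr 1 with x; rw [hf_def]; ring]
    rw [integral_sub (f := fun x => u' x - u x)
      (g := fun x => 2 * (u' x * conv x - u x * conv x))
      (hu'int.sub huint) ((hi_u'c.sub hi_uc).const_mul 2),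
      integral_sub (f := u') (g := u) hu'int huint,
      integral_const_mul,
      integral_sub (f := fun x => u' x * conv x) (g := fun x => u x * conv x) hi_u'c hi_uc]
  rw [hE, hE']
  rw [hT1val] at hT1
  rw [hT2val] at hT2
  linarith
end

section
/- Let d ≥ 1, t > 0, let Σ̄_0, …, Σ̄_{m−1} ⊆ ℝ^d be measurable sets of finite Lebesgue measure, and let γ_0, …, γ_{m−1} be real numbers with Σ_{i=0}^{m−1} γ_i = 1. Define Σ̄_m = { x ∈ ℝ^d : (G_t * Σ_{i=0}^{m−1} γ_i 1_{Σ̄_i})(x) ≥ 1/2 }. Then for every measurable set S ⊆ ℝ^d of finite Lebesgue measure, F(Σ̄_m) ≤ F(S), where F(Σ) = ∫_{ℝ^d} (1 − 1_Σ)(Gْ_t * 1_Σ) dx + Σ_{i=0}^{m−1} γ_i ∫_{ℝ^d} (1_Σ − 1_{Σ̄_i}) · (G_t * (1_Σ − 1_{Σ̄_i})) dx (here G_t denotes the Gaussian kernel); i.e., each stage of the multistage threshold dynamics scheme is the minimizing movements step of the threshold-dynamics energy with respect to the weighted sum of squared G_t-distances to the previous stages. -/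
open MeasureTheory

/-- The relaxed functional of one stage of the multistage threshold dynamics scheme:
`F(Σ) = ∫ (1 − 1_Σ)(G_t * 1_Σ) + Σ_i γ_i ∫ (1_Σ − 1_{Σ̄_i})(G_t * (1_Σ − 1_{Σ̄_i}))`. -/
noncomputable def stageFunctional (d : ℕ) (t : ℝ) (m : ℕ) (γ : ℕ → ℝ)
    (Sb : ℕ → Set (EuclideanSpace ℝ (Fin d))) (S : Set (EuclideanSpace ℝ (Fin d))) : ℝ :=
  (∫ x : EuclideanSpace ℝ (Fin d),
      (1 - Set.indicator S 1 x) * gaussConv d t (Set.indicator S 1) x) +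
  ∑ i ∈ Finset.range m, γ i *
    ∫ x : EuclideanSpace ℝ (Fin d),
      (Set.indicator S 1 x - Set.indicator (Sb i) 1 x) *
        gaussConv d t (fun y => Set.indicator S 1 y - Set.indicator (Sb i) 1 y) x

namespace MSAux

variable {d : ℕ} {t : ℝ}

local notation "E" => EuclideanSpace ℝ (Fin d)

lemma gaussKer_nonneg (ht : 0 < t) (x : E) : 0 ≤ gaussKer d t x := by
  unfold gaussKer
  have : (0:ℝ) < 4 * Real.pi * t := by positivity
  positivity

lemma continuous_gaussKer : Continuous (gaussKer d t) := by
  unfold gaussKer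
  exact continuous_const.mul (((continuous_norm.pow 2).neg.div_const _).rexp)

lemma gaussKer_symm (x y : E) : gaussKer d t (x - y) = gaussKer d t (y - x) := by
  simp [gaussKer, norm_sub_rev]

lemma integrable_gaussKer (ht : 0 < t) : Integrable (gaussKer d t) := by
  have hb : (0:ℝ) < 1 / (4 * t) := by positivity
  have h := (GaussianFourier.integrable_cexp_neg_mul_sq_norm_add
      (V := E) (b := ((1 / (4 * t) : ℝ) : ℂ)) (by simpa using hb) 0 0).norm
  have h2 : Integrable (fun x : E => Real.exp (-‖x‖ ^ 2 / (4 * t))) := by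
    refine h.congr ?_
    filter_upwards with x
    rw [Complex.norm_exp]
    congr 1
    simp only [zero_mul, add_zero]
    rw [show -((1 / (4 * t) : ℝ) : ℂ) * (‖x‖:ℂ) ^ 2 = (((-‖x‖ ^ 2 / (4 * t) : ℝ)) : ℂ) by
      push_cast; ring]
    rw [Complex.ofReal_re]
  exact h2.const_mul _

lemma integral_gaussKer (ht : 0 < t) : ∫ x : E, gaussKer d t x = 1 := by
  have hb : (0:ℝ) < 1 / (4 * t) := by positivity
  have h := GaussianFourier.integral_rexp_neg_mul_sq_norm (V := E) hb
  unfold gaussKer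
  rw [MeasureTheory.integral_const_mul]
  have : ∀ x : E, Real.exp (-‖x‖ ^ 2 / (4 * t)) = Real.exp (-(1 / (4 * t)) * ‖x‖ ^ 2) := by
    intro x; congr 1; ring
  simp_rw [this, h, finrank_euclideanSpace_fin]
  have hπ : Real.pi / (1 / (4 * t)) = 4 * Real.pi * t := by
    field_simp
  rw [hπ, ← Real.rpow_add (by positivity),
    show (-(d:ℝ)/2 + (d:ℝ)/2) = 0 by ring, Real.rpow_zero]

end MSAux

namespace MSAux
variable {d : ℕ} {t : ℝ}
local notation "E" => EuclideanSpace ℝ (Fin d)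

lemma gaussKer_le (ht : 0 < t) (x : E) :
    gaussKer d t x ≤ (4 * Real.pi * t) ^ (-(d:ℝ) / 2) := by
  unfold gaussKer
  have h1 : Real.exp (-‖x‖ ^ 2 / (4 * t)) ≤ 1 := by
    rw [Real.exp_le_one_iff]
    apply div_nonpos_of_nonpos_of_nonneg (neg_nonpos.2 (sq_nonneg _)) (by positivity)
  calc (4 * Real.pi * t) ^ (-(d:ℝ) / 2) * Real.exp (-‖x‖ ^ 2 / (4 * t))
      ≤ (4 * Real.pi * t) ^ (-(d:ℝ) / 2) * 1 :=
        mul_le_mul_of_nonneg_left h1 (Real.rpow_nonneg (by positivity) _)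
    _ = (4 * Real.pi * t) ^ (-(d:ℝ) / 2) := mul_one _

lemma integrable_gaussKer_mul (ht : 0 < t) {u : E → ℝ} (hu : Integrable u) (x : E) :
    Integrable fun y : E => gaussKer d t (x - y) * u y := by
  refine hu.bdd_mul (c := (4 * Real.pi * t) ^ (-(d:ℝ) / 2)) ?_ (Filter.Eventually.of_forall fun y => ?_)
  · exact (continuous_gaussKer.comp (continuous_const.sub continuous_id)).aestronglyMeasurable
  · rw [Real.norm_eq_abs, abs_of_nonneg (gaussKer_nonneg ht _)]
    exact gaussKer_le ht _

lemma gaussConv_swap (u : E → ℝ) :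
    gaussConv d t u = fun x => ∫ y, u y * gaussKer d t (x - y) := by
  funext x
  unfold gaussConv
  congr 1; funext y; ring

lemma stronglyMeasurable_gaussConv {u : E → ℝ} (hu : StronglyMeasurable u) :
    StronglyMeasurable (gaussConv d t u) := by
  have h : StronglyMeasurable (fun p : E × E => gaussKer d t (p.1 - p.2) * u p.2) :=
    ((continuous_gaussKer.comp (continuous_fst.sub continuous_snd)).stronglyMeasurable).mul
      (hu.comp_measurable measurable_snd)
  exact h.integral_prod_right'

lemma integrable_gaussConv (ht : 0 < t) {u : E → ℝ} (hu : Integrable u) :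
    Integrable (gaussConv d t u) := by
  have h := (hu.convolution_integrand (ContinuousLinearMap.mul ℝ ℝ)
      (integrable_gaussKer ht)).integral_prod_left
  simp only [ContinuousLinearMap.mul_apply'] at h
  rw [gaussConv_swap]
  exact h

lemma integral_gaussConv (ht : 0 < t) {u : E → ℝ} (hu : Integrable u) :
    ∫ x : E, gaussConv d t u x = ∫ y, u y := by
  have h := integral_convolution (ContinuousLinearMap.mul ℝ ℝ) hu (integrable_gaussKer ht)
  simp only [ContinuousLinearMap.mul_apply'] at h
  rw [integral_gaussKer ht, mul_one] at h
  rw [gaussConv_swap]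
  rw [← h]
  rfl

lemma gaussConv_sub (ht : 0 < t) {u v : E → ℝ} (hu : Integrable u) (hv : Integrable v)
    (x : E) :
    gaussConv d t (fun y => u y - v y) x = gaussConv d t u x - gaussConv d t v x := by
  unfold gaussConv
  simp_rw [mul_sub]
  exact integral_sub (integrable_gaussKer_mul ht hu x) (integrable_gaussKer_mul ht hv x)

lemma gaussConv_sum {ι : Type*} (s : Finset ι) (c : ι → ℝ) (u : ι → E → ℝ) (ht : 0 < t)
    (hu : ∀ i ∈ s, Integrable (u i)) (x : E) :
    gaussConv d t (fun y => ∑ i ∈ s, c i * u i y) x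
      = ∑ i ∈ s, c i * gaussConv d t (u i) x := by
  unfold gaussConv
  have h : (fun y => gaussKer d t (x - y) * ∑ i ∈ s, c i * u i y)
      = fun y => ∑ i ∈ s, c i * (gaussKer d t (x - y) * u i y) := by
    funext y
    rw [Finset.mul_sum]
    exact Finset.sum_congr rfl fun i _ => by ring
  rw [h, integral_finset_sum]
  · exact Finset.sum_congr rfl fun i hi => integral_const_mul _ _
  · exact fun i hi => (integrable_gaussKer_mul ht (hu i hi) x).const_mul _

lemma bilin_symm (ht : 0 < t) {u v : E → ℝ} (hu : Integrable u) (hsu : StronglyMeasurable u)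
    {Cu : ℝ} (hbu : ∀ x, ‖u x‖ ≤ Cu) (hv : Integrable v) (hsv : StronglyMeasurable v) :
    ∫ x, u x * gaussConv d t v x = ∫ x, v x * gaussConv d t u x := by
  have hCu : 0 ≤ Cu := le_trans (norm_nonneg _) (hbu 0)
  have hmeas : StronglyMeasurable (fun p : E × E => u p.1 * (gaussKer d t (p.1 - p.2) * v p.2)) :=
    (hsu.comp_measurable measurable_fst).mul
      (((continuous_gaussKer.comp (continuous_fst.sub continuous_snd)).stronglyMeasurable).mul
        (hsv.comp_measurable measurable_snd))
  have hmaj : Integrable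
      (fun p : E × E => Cu * (‖v p.2‖ * gaussKer d t (p.1 - p.2)))
      ((volume : Measure E).prod volume) := by
    have := hv.norm.convolution_integrand (ContinuousLinearMap.mul ℝ ℝ) (integrable_gaussKer ht)
    simp only [ContinuousLinearMap.mul_apply'] at this
    exact this.const_mul _
  have hF : Integrable (fun p : E × E => u p.1 * (gaussKer d t (p.1 - p.2) * v p.2))
      ((volume : Measure E).prod volume) := by
    refine Integrable.mono hmaj hmeas.aestronglyMeasurable ?_
    filter_upwards with p
    have h0 : 0 ≤ gaussKer d t (p.1 - p.2) := gaussKer_nonneg ht _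
    have h1 : ‖u p.1‖ ≤ Cu := hbu _
    have hrhs : ‖Cu * (‖v p.2‖ * gaussKer d t (p.1 - p.2))‖
        = Cu * (‖v p.2‖ * gaussKer d t (p.1 - p.2)) := by
      rw [Real.norm_eq_abs]; exact abs_of_nonneg (by positivity)
    rw [hrhs, norm_mul, norm_mul, Real.norm_eq_abs (gaussKer d t (p.1 - p.2)),
      abs_of_nonneg h0]
    calc ‖u p.1‖ * (gaussKer d t (p.1 - p.2) * ‖v p.2‖)
        ≤ Cu * (gaussKer d t (p.1 - p.2) * ‖v p.2‖) :=
          mul_le_mul_of_nonneg_right h1 (by positivity)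
      _ = Cu * (‖v p.2‖ * gaussKer d t (p.1 - p.2)) := by ring
  calc ∫ x, u x * gaussConv d t v x
      = ∫ x, ∫ y, u x * (gaussKer d t (x - y) * v y) := by
        congr 1; funext x
        unfold gaussConv
        exact (integral_const_mul _ _).symm
    _ = ∫ y, ∫ x, u x * (gaussKer d t (x - y) * v y) := integral_integral_swap hF
    _ = ∫ y, v y * gaussConv d t u y := by
        congr 1; funext y
        calc ∫ x, u x * (gaussKer d t (x - y) * v y)
            = ∫ x, v y * (gaussKer d t (y - x) * u x) := by
              congr 1; funext x
              rw [gaussKer_symm]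
              ring
          _ = v y * gaussConv d t u y := by rw [integral_const_mul]; rfl

lemma indicator_norm_le (A : Set E) (x : E) : ‖A.indicator (1 : E → ℝ) x‖ ≤ 1 := by
  by_cases hx : x ∈ A <;>
    simp [Set.indicator_of_mem, Set.indicator_of_notMem, hx]

lemma integrable_indicator_one {A : Set E} (hA : MeasurableSet A) (hAv : volume A < ⊤) :
    Integrable (A.indicator (1 : E → ℝ)) := by
  rw [integrable_indicator_iff hA]
  exact integrableOn_const hAv.ne

end MSAux

namespace MSAux
variable {d : ℕ} {t : ℝ}
local notation "E" => EuclideanSpace ℝ (Fin d)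

lemma stage_identity (ht : 0 < t) (m : ℕ) (Sb : ℕ → Set E)
    (hSb : ∀ i < m, MeasurableSet (Sb i) ∧ volume (Sb i) < ⊤)
    (γ : ℕ → ℝ) (hγ : ∑ i ∈ Finset.range m, γ i = 1)
    (S : Set E) (hS : MeasurableSet S) (hvol : volume S < ⊤) :
    stageFunctional d t m γ Sb S
      = (∫ x : E, Set.indicator S 1 x *
          (1 - 2 * gaussConv d t
            (fun y => ∑ i ∈ Finset.range m, γ i * Set.indicator (Sb i) 1 y) x))
        + ∑ i ∈ Finset.range m, γ i *
            ∫ x : E, Set.indicator (Sb i) 1 x * gaussConv d t (Set.indicator (Sb i) 1) x := by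
  unfold stageFunctional
  set w : E → ℝ := fun y => ∑ i ∈ Finset.range m, γ i * Set.indicator (Sb i) 1 y with hw
  have hindS : Integrable (S.indicator (1 : E → ℝ)) := integrable_indicator_one hS hvol
  have hsmS : StronglyMeasurable (S.indicator (1 : E → ℝ)) :=
    stronglyMeasurable_one.indicator hS
  have hindi : ∀ i ∈ Finset.range m, Integrable ((Sb i).indicator (1 : E → ℝ)) := fun i hi =>
    integrable_indicator_one (hSb i (Finset.mem_range.1 hi)).1 (hSb i (Finset.mem_range.1 hi)).2
  have hsmi : ∀ i ∈ Finset.range m, StronglyMeasurable ((Sb i).indicator (1 : E → ℝ)) :=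
    fun i hi => stronglyMeasurable_one.indicator (hSb i (Finset.mem_range.1 hi)).1
  have hw_int : Integrable w := integrable_finset_sum _ fun i hi => ((hindi i hi).const_mul _)
  have hw_meas : Measurable w := by
    rw [hw]
    exact Finset.measurable_sum _ fun i hi =>
      ((measurable_const.indicator (hSb i (Finset.mem_range.1 hi)).1).const_mul _)
  have hw_sm : StronglyMeasurable w := hw_meas.stronglyMeasurable
  have hw_bdd : ∀ y : E, ‖w y‖ ≤ ∑ i ∈ Finset.range m, |γ i| := by
    intro y
    simp only [hw]
    calc ‖∑ i ∈ Finset.range m, γ i * Set.indicator (Sb i) 1 y‖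
        ≤ ∑ i ∈ Finset.range m, ‖γ i * Set.indicator (Sb i) 1 y‖ := norm_sum_le _ _
      _ ≤ ∑ i ∈ Finset.range m, |γ i| := by
          refine Finset.sum_le_sum fun i _ => ?_
          rw [norm_mul, Real.norm_eq_abs (γ i)]
          calc |γ i| * ‖Set.indicator (Sb i) 1 y‖ ≤ |γ i| * 1 :=
                mul_le_mul_of_nonneg_left (indicator_norm_le _ _) (abs_nonneg _)
            _ = |γ i| := mul_one _
  have hconvS : Integrable (gaussConv d t (S.indicator 1)) := integrable_gaussConv ht hindS
  have hconvi : ∀ i ∈ Finset.range m, Integrable (gaussConv d t ((Sb i).indicator 1)) :=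
    fun i hi => integrable_gaussConv ht (hindi i hi)
  have hmulSS : Integrable (fun x => S.indicator 1 x * gaussConv d t (S.indicator 1) x) :=
    hconvS.bdd_mul hsmS.aestronglyMeasurable (Filter.Eventually.of_forall (indicator_norm_le S))
  have hmulSi : ∀ i ∈ Finset.range m,
      Integrable (fun x => S.indicator 1 x * gaussConv d t ((Sb i).indicator 1) x) :=
    fun i hi => (hconvi i hi).bdd_mul hsmS.aestronglyMeasurable (Filter.Eventually.of_forall (indicator_norm_le S))
  have hmuliS : ∀ i ∈ Finset.range m,
      Integrable (fun x => (Sb i).indicator 1 x * gaussConv d t (S.indicator 1) x) :=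
    fun i hi => hconvS.bdd_mul (hsmi i hi).aestronglyMeasurable (Filter.Eventually.of_forall (indicator_norm_le _))
  have hmulSw : Integrable (fun x => S.indicator 1 x * gaussConv d t w x) :=
    (integrable_gaussConv ht hw_int).bdd_mul hsmS.aestronglyMeasurable (Filter.Eventually.of_forall (indicator_norm_le S))
  set a : ℝ := ∫ x : E, S.indicator 1 x * gaussConv d t (S.indicator 1) x with ha
  set b : ℝ := ∫ x : E, S.indicator 1 x with hb
  set c : ℝ := ∫ x : E, S.indicator 1 x * gaussConv d t w x with hc
  -- Step 1 : the threshold-dynamics term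
  have hT1 : (∫ x : E, (1 - S.indicator 1 x) * gaussConv d t (S.indicator 1) x) = b - a := by
    rw [hb, ha, ← integral_gaussConv ht hindS, ← integral_sub hconvS hmulSS]
    congr 1; funext x; ring
  -- Step 2 : expansion of each quadratic term
  have hTi : ∀ i ∈ Finset.range m,
      (∫ x : E, (S.indicator 1 x - (Sb i).indicator 1 x) *
          gaussConv d t (fun y => S.indicator 1 y - (Sb i).indicator 1 y) x)
        = (a - ∫ x : E, S.indicator 1 x * gaussConv d t ((Sb i).indicator 1) x)
          - ((∫ x : E, (Sb i).indicator 1 x * gaussConv d t (S.indicator 1) x)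
             - ∫ x : E, (Sb i).indicator 1 x * gaussConv d t ((Sb i).indicator 1) x) := by
    intro i hi
    have hmulii : Integrable
        (fun x => (Sb i).indicator 1 x * gaussConv d t ((Sb i).indicator 1) x) :=
      (hconvi i hi).bdd_mul (hsmi i hi).aestronglyMeasurable (Filter.Eventually.of_forall (indicator_norm_le _))
    have hsub : ∀ x : E, gaussConv d t (fun y => S.indicator 1 y - (Sb i).indicator 1 y) x
        = gaussConv d t (S.indicator 1) x - gaussConv d t ((Sb i).indicator 1) x :=
      gaussConv_sub ht hindS (hindi i hi)
    have hrw : (fun x : E => (S.indicator 1 x - (Sb i).indicator 1 x) *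
          gaussConv d t (fun y => S.indicator 1 y - (Sb i).indicator 1 y) x)
        = fun x : E =>
            (S.indicator 1 x * gaussConv d t (S.indicator 1) x
              - S.indicator 1 x * gaussConv d t ((Sb i).indicator 1) x)
            - ((Sb i).indicator 1 x * gaussConv d t (S.indicator 1) x
              - (Sb i).indicator 1 x * gaussConv d t ((Sb i).indicator 1) x) := by
      funext x; rw [hsub x]; ring
    have h12 : Integrable (fun x : E => S.indicator 1 x * gaussConv d t (S.indicator 1) x
        - S.indicator 1 x * gaussConv d t ((Sb i).indicator 1) x) :=
      hmulSS.sub (hmulSi i hi)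
    have h34 : Integrable (fun x : E => (Sb i).indicator 1 x * gaussConv d t (S.indicator 1) x
        - (Sb i).indicator 1 x * gaussConv d t ((Sb i).indicator 1) x) :=
      (hmuliS i hi).sub hmulii
    rw [hrw, integral_sub h12 h34, integral_sub hmulSS (hmulSi i hi),
      integral_sub (hmuliS i hi) hmulii, ha]
  -- Step 3 : the cross terms
  have hBS : ∑ i ∈ Finset.range m,
      γ i * ∫ x : E, S.indicator 1 x * gaussConv d t ((Sb i).indicator 1) x = c := by
    rw [hc]
    calc ∑ i ∈ Finset.range m,
        γ i * ∫ x : E, S.indicator 1 x * gaussConv d t ((Sb i).indicator 1) x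
        = ∑ i ∈ Finset.range m,
            ∫ x : E, γ i * (S.indicator 1 x * gaussConv d t ((Sb i).indicator 1) x) :=
          Finset.sum_congr rfl fun i hi => (integral_const_mul _ _).symm
      _ = ∫ x : E, ∑ i ∈ Finset.range m,
            γ i * (S.indicator 1 x * gaussConv d t ((Sb i).indicator 1) x) :=
          (integral_finset_sum _ fun i hi => ((hmulSi i hi).const_mul _)).symm
      _ = ∫ x : E, S.indicator 1 x * gaussConv d t w x := by
          congr 1; funext x
          rw [show gaussConv d t w x
              = ∑ i ∈ Finset.range m, γ i * gaussConv d t ((Sb i).indicator 1) x from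
            gaussConv_sum (Finset.range m) γ _ ht (fun i hi => hindi i hi) x]
          rw [Finset.mul_sum]
          exact Finset.sum_congr rfl fun i _ => by ring
  have hCS : ∑ i ∈ Finset.range m,
      γ i * ∫ x : E, (Sb i).indicator 1 x * gaussConv d t (S.indicator 1) x = c := by
    rw [hc]
    calc ∑ i ∈ Finset.range m,
        γ i * ∫ x : E, (Sb i).indicator 1 x * gaussConv d t (S.indicator 1) x
        = ∑ i ∈ Finset.range m,
            ∫ x : E, γ i * ((Sb i).indicator 1 x * gaussConv d t (S.indicator 1) x) :=
          Finset.sum_congr rfl fun i hi => (integral_const_mul _ _).symm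
      _ = ∫ x : E, ∑ i ∈ Finset.range m,
            γ i * ((Sb i).indicator 1 x * gaussConv d t (S.indicator 1) x) :=
          (integral_finset_sum _ fun i hi => ((hmuliS i hi).const_mul _)).symm
      _ = ∫ x : E, w x * gaussConv d t (S.indicator 1) x := by
          congr 1; funext x
          simp only [hw]
          rw [Finset.sum_mul]
          exact Finset.sum_congr rfl fun i _ => by ring
      _ = ∫ x : E, S.indicator 1 x * gaussConv d t w x :=
          bilin_symm ht hw_int hw_sm hw_bdd hindS hsmS
  -- Step 4 : split the target integral
  have hsplit : (∫ x : E, S.indicator 1 x * (1 - 2 * gaussConv d t w x)) = b - 2 * c := by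
    rw [hb, hc, ← integral_const_mul 2, ← integral_sub hindS (hmulSw.const_mul 2)]
    congr 1; funext x; ring
  -- Conclusion
  rw [hT1, Finset.sum_congr rfl (fun i hi => by rw [hTi i hi]), hsplit]
  have hexp : ∑ i ∈ Finset.range m,
      γ i * ((a - ∫ x : E, S.indicator 1 x * gaussConv d t ((Sb i).indicator 1) x)
        - ((∫ x : E, (Sb i).indicator 1 x * gaussConv d t (S.indicator 1) x)
           - ∫ x : E, (Sb i).indicator 1 x * gaussConv d t ((Sb i).indicator 1) x))
      = a - c - c
        + ∑ i ∈ Finset.range m,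
            γ i * ∫ x : E, (Sb i).indicator 1 x * gaussConv d t ((Sb i).indicator 1) x := by
    rw [Finset.sum_congr rfl (fun i (hi : i ∈ Finset.range m) =>
      show γ i * ((a - ∫ x : E, S.indicator 1 x * gaussConv d t ((Sb i).indicator 1) x)
        - ((∫ x : E, (Sb i).indicator 1 x * gaussConv d t (S.indicator 1) x)
           - ∫ x : E, (Sb i).indicator 1 x * gaussConv d t ((Sb i).indicator 1) x))
        = (γ i * a
          - γ i * (∫ x : E, S.indicator 1 x * gaussConv d t ((Sb i).indicator 1) x))
          - (γ i * (∫ x : E, (Sb i).indicator 1 x * gaussConv d t (S.indicator 1) x)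
             - γ i * (∫ x : E, (Sb i).indicator 1 x * gaussConv d t ((Sb i).indicator 1) x))
        from by ring)]
    rw [Finset.sum_sub_distrib, Finset.sum_sub_distrib, Finset.sum_sub_distrib,
      ← Finset.sum_mul, hγ, one_mul]
    have hmul : ∀ (f : ℕ → ℝ), (∑ i ∈ Finset.range m, γ i * f i)
        = ∑ i ∈ Finset.range m, γ i * f i := fun _ => rfl
    rw [hBS, hCS]
    ring
  rw [hexp]
  ring

end MSAux

/-- Each stage of the multistage threshold dynamics scheme minimizes the
threshold-dynamics energy plus the weighted sum of squared `G_t`-distances to the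
previous stages. -/
theorem multistage_stage_is_minimizing_movement (d : ℕ) (hd : 1 ≤ d)
    (t : ℝ) (ht : 0 < t) (m : ℕ)
    (Sb : ℕ → Set (EuclideanSpace ℝ (Fin d)))
    (hSb : ∀ i < m, MeasurableSet (Sb i) ∧ volume (Sb i) < ⊤)
    (γ : ℕ → ℝ) (hγ : ∑ i ∈ Finset.range m, γ i = 1)
    (Sm : Set (EuclideanSpace ℝ (Fin d)))
    (hSm : Sm = {x : EuclideanSpace ℝ (Fin d) |
      1 / 2 ≤ gaussConv d t
        (fun y => ∑ i ∈ Finset.range m, γ i * Set.indicator (Sb i) 1 y) x}) :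
    ∀ S : Set (EuclideanSpace ℝ (Fin d)), MeasurableSet S → volume S < ⊤ →
      stageFunctional d t m γ Sb Sm ≤ stageFunctional d t m γ Sb S := by
  intro S hS hvolS
  set w : EuclideanSpace ℝ (Fin d) → ℝ :=
    fun y => ∑ i ∈ Finset.range m, γ i * Set.indicator (Sb i) 1 y with hw
  have hw_int : Integrable w :=
    integrable_finset_sum _ fun i hi =>
      ((MSAux.integrable_indicator_one (hSb i (Finset.mem_range.1 hi)).1
        (hSb i (Finset.mem_range.1 hi)).2).const_mul _)
  have hw_meas : Measurable w := by
    rw [hw]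
    exact Finset.measurable_sum _ fun i hi =>
      ((measurable_const.indicator (hSb i (Finset.mem_range.1 hi)).1).const_mul _)
  have hφ_int : Integrable (gaussConv d t w) := MSAux.integrable_gaussConv ht hw_int
  have hφ_sm : StronglyMeasurable (gaussConv d t w) :=
    MSAux.stronglyMeasurable_gaussConv hw_meas.stronglyMeasurable
  have hSm_meas : MeasurableSet Sm := by
    rw [hSm]
    exact measurableSet_le measurable_const hφ_sm.measurable
  have hSm_vol : volume Sm < ⊤ := by
    rw [hSm]
    exact hφ_int.measure_ge_lt_top (by norm_num)
  rw [MSAux.stage_identity ht m Sb hSb γ hγ Sm hSm_meas hSm_vol,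
    MSAux.stage_identity ht m Sb hSb γ hγ S hS hvolS]
  simp only [← hw]
  rw [add_le_add_iff_right]
  have key : ∀ (A : Set (EuclideanSpace ℝ (Fin d))), MeasurableSet A → volume A < ⊤ →
      Integrable (fun x => A.indicator 1 x * (1 - 2 * gaussConv d t w x)) := by
    intro A hA hAv
    have h1 : Integrable (A.indicator (1 : EuclideanSpace ℝ (Fin d) → ℝ)) :=
      MSAux.integrable_indicator_one hA hAv
    have h2 : Integrable (fun x => A.indicator 1 x * gaussConv d t w x) :=
      hφ_int.bdd_mul (stronglyMeasurable_one.indicator hA).aestronglyMeasurable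
        (Filter.Eventually.of_forall (MSAux.indicator_norm_le A))
    have hrw : (fun x => A.indicator 1 x * (1 - 2 * gaussConv d t w x))
        = fun x => A.indicator 1 x - 2 * (A.indicator 1 x * gaussConv d t w x) := by
      funext x; ring
    rw [hrw]
    exact h1.sub (h2.const_mul 2)
  refine integral_mono (key Sm hSm_meas hSm_vol) (key S hS hvolS) ?_
  intro x
  dsimp only
  by_cases hx : x ∈ Sm
  · have hφx : 1 / 2 ≤ gaussConv d t w x := by
      rw [hSm] at hx; exact hx
    have h0 : 1 - 2 * gaussConv d t w x ≤ 0 := by linarith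
    rw [Set.indicator_of_mem hx]
    simp only [Pi.one_apply]
    have hle1 : S.indicator (1 : EuclideanSpace ℝ (Fin d) → ℝ) x ≤ 1 := by
      by_cases hxS : x ∈ S <;>
        simp [Set.indicator_of_mem, Set.indicator_of_notMem, hxS]
    exact mul_le_mul_of_nonpos_right hle1 h0
  · rw [Set.indicator_of_notMem hx, zero_mul]
    have hφx : gaussConv d t w x < 1 / 2 := by
      by_contra hcon
      exact hx (by rw [hSm]; exact not_lt.1 hcon)
    have hindnn : 0 ≤ S.indicator (1 : EuclideanSpace ℝ (Fin d) → ℝ) x := by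
      by_cases hxS : x ∈ S <;>
        simp [Set.indicator_of_mem, Set.indicator_of_notMem, hxS]
    exact mul_nonneg hindnn (by linarith)
end
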